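/- Let M be a free ℤ-module of finite rank m with basis x₁,…,xₘ. Then the image S''ₙ(M) of the symmetrization map on Tⁿ(M) is a free ℤ-module with basis the elements k₁!⋯k_s!·(x_{j₁}^{(k₁)}⋯x_{j_s}^{(k_s)})* for 1 ≤ j₁ < ⋯ < j_s ≤ m, positive k₁,…,k_s with sum n, and 1 ≤ s ≤ n. -/

import Mathlib

/-- The linear map on the `n`-th tensor power `Tⁿ(M)` permuting the factors by
`σ`: it sends `x₁ ⊗ ⋯ ⊗ xₙ` to `x_{σ⁻¹(1)} ⊗ ⋯ ⊗ x_{σ⁻¹(n)}`. -/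
noncomputable def permMap (A M : Type*) [CommRing A] [AddCommGroup M] [Module A M]
    (n : ℕ) (σ : Equiv.Perm (Fin n)) :
    PiTensorProduct A (fun _ : Fin n => M) →ₗ[A] PiTensorProduct A (fun _ : Fin n => M) :=
  (PiTensorProduct.reindex A (fun _ : Fin n => M) σ).toLinearMap

/-- `S'ₙ(M)`: the submodule of symmetric tensors in `Tⁿ(M)`. -/
noncomputable def symTensors (A M : Type*) [CommRing A] [AddCommGroup M] [Module A M]
    (n : ℕ) : Submodule A (PiTensorProduct A (fun _ : Fin n => M)) :=
  ⨅ σ : Equiv.Perm (Fin n), LinearMap.eqLocus (permMap A M n σ) LinearMap.id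

/-- The symmetrization map `z ↦ ∑_{σ ∈ Sₙ} σ z` on `Tⁿ(M)`. -/
noncomputable def symmetrize (A M : Type*) [CommRing A] [AddCommGroup M] [Module A M]
    (n : ℕ) :
    PiTensorProduct A (fun _ : Fin n => M) →ₗ[A] PiTensorProduct A (fun _ : Fin n => M) :=
  ∑ σ : Equiv.Perm (Fin n), permMap A M n σ

/-- `Pₙ(M)`: the submodule of `Tⁿ(M)` generated by the `n`-th tensor powers
`x ⊗ ⋯ ⊗ x` of elements `x ∈ M`. -/
noncomputable def powersSubmodule (A M : Type*) [CommRing A] [AddCommGroup M] [Module A M]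
    (n : ℕ) : Submodule A (PiTensorProduct A (fun _ : Fin n => M)) :=
  Submodule.span A {z | ∃ x : M, z = PiTensorProduct.tprod A (fun _ : Fin n => x)}

/-- `(x_{g 1} ⋯ x_{g n})*`: the sum of all distinct tensors obtained by permuting
the factors of the pure tensor `x_{g 1} ⊗ ⋯ ⊗ x_{g n}`, i.e. the sum over all
words `w` that are rearrangements of `g` of `x_{w 1} ⊗ ⋯ ⊗ x_{w n}`. -/
noncomputable def distinctSym (M : Type*) [AddCommGroup M] [Module ℤ M]
    {m : ℕ} (x : Fin m → M) (n : ℕ) (g : Fin n → Fin m) :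
    PiTensorProduct ℤ (fun _ : Fin n => M) :=
  ∑ w ∈ Finset.univ.filter
      (fun w : Fin n → Fin m =>
        Multiset.map w Finset.univ.val = Multiset.map g Finset.univ.val),
    PiTensorProduct.tprod ℤ (fun i => x (w i))



open Finset PiTensorProduct

section AuxStmt12

variable {M : Type*} [AddCommGroup M] [Module ℤ M] {m n : ℕ}

/-- multiset of values of a tuple -/
private def msc (f : Fin n → Fin m) : Multiset (Fin m) := Multiset.map f Finset.univ.val

private lemma msc_comp_perm (f : Fin n → Fin m) (σ : Equiv.Perm (Fin n)) :
    msc (f ∘ ⇑σ) = msc f := by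
  unfold msc
  rw [← Multiset.map_map]
  congr 1
  have h := Finset.map_univ_equiv σ
  calc Multiset.map ⇑σ Finset.univ.val = (Finset.univ.map σ.toEmbedding).val := rfl
    _ = Finset.univ.val := by rw [h]

private lemma msc_eq_iff_ofFn_perm (w g : Fin n → Fin m) :
    msc w = msc g ↔ (List.ofFn w).Perm (List.ofFn g) := by
  have h1 : ∀ f : Fin n → Fin m, msc f = ↑(List.ofFn f) := by
    intro f
    unfold msc
    rw [List.ofFn_eq_map]
    rfl
  rw [h1, h1, Multiset.coe_eq_coe]

private lemma exists_perm_of_msc_eq {w g : Fin n → Fin m} (h : msc w = msc g) :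
    ∃ σ : Equiv.Perm (Fin n), g ∘ ⇑σ = w := by
  have hperm : (List.ofFn (w ∘ ⇑(Tuple.sort w))).Perm (List.ofFn (g ∘ ⇑(Tuple.sort g))) :=
    ((Equiv.Perm.ofFn_comp_perm (Tuple.sort w) w).trans
      ((msc_eq_iff_ofFn_perm w g).mp h)).trans
      (Equiv.Perm.ofFn_comp_perm (Tuple.sort g) g).symm
  have heq : w ∘ ⇑(Tuple.sort w) = g ∘ ⇑(Tuple.sort g) :=
    List.ofFn_injective <|
      List.Perm.eq_of_sortedLE (Tuple.monotone_sort w).sortedLE_ofFn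
        (Tuple.monotone_sort g).sortedLE_ofFn hperm
  refine ⟨Tuple.sort g * (Tuple.sort w)⁻¹, funext fun i => ?_⟩
  have := congrFun heq.symm ((Tuple.sort w)⁻¹ i)
  simpa using this

private lemma msc_eq_of_comp_perm {w g : Fin n → Fin m} (σ : Equiv.Perm (Fin n))
    (h : g ∘ ⇑σ = w) : msc w = msc g := by
  rw [← h, msc_comp_perm]

private lemma monotone_unique {w g : Fin n → Fin m} (hw : Monotone w) (hg : Monotone g)
    (h : msc w = msc g) : w = g :=
  List.ofFn_injective <|
    List.Perm.eq_of_sortedLE hw.sortedLE_ofFn hg.sortedLE_ofFn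
      ((msc_eq_iff_ofFn_perm w g).mp h)

private lemma card_filter_eq_count (f : Fin n → Fin m) (j : Fin m) :
    (Finset.univ.filter fun i => f i = j).card = Multiset.count j (msc f) := by
  unfold msc
  rw [Multiset.count_map]
  simp [Finset.filter, eq_comm]

private lemma K_congr {w g : Fin n → Fin m} (h : msc w = msc g) :
    (∏ j : Fin m, ((Finset.univ.filter fun i => w i = j).card).factorial)
      = ∏ j : Fin m, ((Finset.univ.filter fun i => g i = j).card).factorial := by
  refine Finset.prod_congr rfl fun j _ => ?_
  rw [card_filter_eq_count, card_filter_eq_count, h]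

private lemma card_coset {w g : Fin n → Fin m} (h : msc w = msc g) :
    (Finset.univ.filter fun σ : Equiv.Perm (Fin n) => g ∘ ⇑σ = w).card
      = ∏ j : Fin m, ((Finset.univ.filter fun i => g i = j).card).factorial := by
  classical
  obtain ⟨σ₀, hσ₀⟩ := exists_perm_of_msc_eq h
  have hkey : ∀ u v : Fin n → Fin m, u ∘ ⇑σ₀ = v ∘ ⇑σ₀ → u = v := by
    intro u v huv
    funext i
    have := congrFun huv (σ₀⁻¹ i)
    simpa using this
  have e : {σ : Equiv.Perm (Fin n) // g ∘ ⇑σ = g} ≃ {σ : Equiv.Perm (Fin n) // g ∘ ⇑σ = w} := by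
    refine (Equiv.mulRight σ₀).subtypeEquiv fun σ => ?_
    constructor
    · intro hσ
      show g ∘ ⇑(σ * σ₀) = w
      rw [Equiv.Perm.coe_mul, ← Function.comp_assoc, hσ, hσ₀]
    · intro hσ
      have h2 : (g ∘ ⇑σ) ∘ ⇑σ₀ = g ∘ ⇑σ₀ := by
        rw [hσ₀]
        calc (g ∘ ⇑σ) ∘ ⇑σ₀ = g ∘ ⇑(σ * σ₀) := by rw [Equiv.Perm.coe_mul, Function.comp_assoc]
          _ = w := hσ
      exact hkey _ _ h2
  calc (Finset.univ.filter fun σ : Equiv.Perm (Fin n) => g ∘ ⇑σ = w).card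
      = Fintype.card {σ : Equiv.Perm (Fin n) // g ∘ ⇑σ = w} := (Fintype.card_subtype _).symm
    _ = Fintype.card {σ : Equiv.Perm (Fin n) // g ∘ ⇑σ = g} := (Fintype.card_congr e).symm
    _ = ∏ j : Fin m, (Fintype.card {i // g i = j}).factorial := DomMulAct.stabilizer_card g
    _ = ∏ j : Fin m, ((Finset.univ.filter fun i => g i = j).card).factorial := by
        refine Finset.prod_congr rfl fun j _ => ?_
        rw [Fintype.card_subtype]

end AuxStmt12

section Aux2

variable {M : Type*} [AddCommGroup M] [Module ℤ M] {m n : ℕ}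

private lemma symmetrize_tp (b : Module.Basis (Fin m) ℤ M) (f : Fin n → Fin m) :
    symmetrize ℤ M n (PiTensorProduct.tprod ℤ fun i => b (f i)) =
      (∏ j : Fin m, ((Finset.univ.filter fun i => f i = j).card).factorial) •
        distinctSym M (⇑b) n f := by
  classical
  have step1 : symmetrize ℤ M n (PiTensorProduct.tprod ℤ fun i => b (f i)) =
      ∑ σ : Equiv.Perm (Fin n), PiTensorProduct.tprod ℤ fun i => b (f (σ.symm i)) := by
    rw [symmetrize, LinearMap.sum_apply]
    refine Finset.sum_congr rfl fun σ _ => ?_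
    exact PiTensorProduct.reindex_tprod σ _
  have step2 : (∑ σ : Equiv.Perm (Fin n), PiTensorProduct.tprod ℤ fun i => b (f (σ.symm i)))
      = ∑ σ : Equiv.Perm (Fin n), PiTensorProduct.tprod ℤ fun i => b (f (σ i)) :=
    Fintype.sum_equiv (Equiv.inv (Equiv.Perm (Fin n)))
      (fun σ => PiTensorProduct.tprod ℤ fun i => b (f (σ.symm i)))
      (fun σ => PiTensorProduct.tprod ℤ fun i => b (f (σ i))) (fun σ => rfl)
  have step3 : (∑ σ : Equiv.Perm (Fin n), PiTensorProduct.tprod ℤ fun i => b (f (σ i)))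
      = ∑ w ∈ Finset.univ.image (fun σ : Equiv.Perm (Fin n) => f ∘ ⇑σ),
          (Finset.univ.filter fun σ : Equiv.Perm (Fin n) => f ∘ ⇑σ = w).card •
            (PiTensorProduct.tprod ℤ fun i => b (w i)) := by
    exact Finset.sum_comp (fun w : Fin n → Fin m => PiTensorProduct.tprod ℤ fun i => b (w i))
      (fun σ : Equiv.Perm (Fin n) => f ∘ ⇑σ)
  have himage : Finset.univ.image (fun σ : Equiv.Perm (Fin n) => f ∘ ⇑σ)
      = Finset.univ.filter (fun w : Fin n → Fin m =>
          Multiset.map w Finset.univ.val = Multiset.map f Finset.univ.val) := by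
    ext w
    simp only [Finset.mem_image, Finset.mem_filter, Finset.mem_univ, true_and]
    constructor
    · rintro ⟨σ, _, rfl⟩
      exact msc_eq_of_comp_perm σ rfl
    · intro hw
      obtain ⟨σ, hσ⟩ := exists_perm_of_msc_eq (w := w) (g := f) hw
      exact ⟨σ, hσ⟩
  rw [step1, step2, step3, himage, distinctSym, ← Finset.sum_nsmul]
  refine Finset.sum_congr rfl fun w hw => ?_
  rw [Finset.mem_filter] at hw
  have hmsc : msc w = msc f := hw.2
  rw [card_coset hmsc]

end Aux2


section Aux3

variable {M : Type*} [AddCommGroup M] [Module ℤ M] {m n : ℕ}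

/-- coordinate functional on `Tⁿ(M)` attached to a word `g`. -/
private noncomputable def phi (b : Module.Basis (Fin m) ℤ M) (g : Fin n → Fin m) :
    PiTensorProduct ℤ (fun _ : Fin n => M) →ₗ[ℤ] ℤ :=
  PiTensorProduct.lift
    ((MultilinearMap.mkPiAlgebra ℤ (Fin n) ℤ).compLinearMap fun i => b.coord (g i))

private lemma phi_tp (b : Module.Basis (Fin m) ℤ M) (g w : Fin n → Fin m) :
    phi b g (PiTensorProduct.tprod ℤ fun i => b (w i)) = if w = g then 1 else 0 := by
  classical
  rw [phi, PiTensorProduct.lift.tprod]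
  simp only [MultilinearMap.compLinearMap_apply, MultilinearMap.mkPiAlgebra_apply,
    Module.Basis.coord_apply, Module.Basis.repr_self]
  by_cases h : w = g
  · subst h
    simp
  · obtain ⟨i, hi⟩ := Function.ne_iff.mp h
    rw [if_neg h]
    refine Finset.prod_eq_zero (Finset.mem_univ i) ?_
    rw [Finsupp.single_apply, if_neg hi]

private lemma phi_distinctSym (b : Module.Basis (Fin m) ℤ M) (g f : Fin n → Fin m) :
    phi b g (distinctSym M (⇑b) n f) = if msc g = msc f then 1 else 0 := by
  classical
  rw [distinctSym, map_sum]
  have : ∀ w ∈ Finset.univ.filter (fun w : Fin n → Fin m =>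
      Multiset.map w Finset.univ.val = Multiset.map f Finset.univ.val),
      phi b g (PiTensorProduct.tprod ℤ fun i => b (w i)) = if w = g then 1 else 0 :=
    fun w _ => phi_tp b g w
  rw [Finset.sum_congr rfl this, Finset.sum_ite_eq' _ g (fun _ => (1 : ℤ))]
  congr 1
  simp only [Finset.mem_filter, Finset.mem_univ, true_and]
  rfl


private lemma span_tprod_basis' {R M' : Type*} [CommRing R] [AddCommGroup M'] [Module R M']
    {m n : ℕ} (b : Module.Basis (Fin m) R M') :
    Submodule.span R
      (Set.range fun w : Fin n → Fin m => PiTensorProduct.tprod R fun i : Fin n => b (w i)) = ⊤ := by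
  classical
  rw [eq_top_iff, ← PiTensorProduct.span_tprod_eq_top, Submodule.span_le]
  rintro _ ⟨f, rfl⟩
  have hexp : PiTensorProduct.tprod R f
      = ∑ w : Fin n → Fin m, (∏ i : Fin n, b.repr (f i) (w i)) •
          (PiTensorProduct.tprod R fun i => b (w i)) := by
    calc PiTensorProduct.tprod R f
        = PiTensorProduct.tprod R (fun i => ∑ j : Fin m, b.repr (f i) j • b j) := by
          congr 1
          funext i
          exact (b.sum_repr (f i)).symm
      _ = ∑ w : Fin n → Fin m, PiTensorProduct.tprod R
            (fun i => b.repr (f i) (w i) • b (w i)) :=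
          MultilinearMap.map_sum _ _
      _ = ∑ w : Fin n → Fin m, (∏ i : Fin n, b.repr (f i) (w i)) •
            (PiTensorProduct.tprod R fun i => b (w i)) := by
          refine Finset.sum_congr rfl fun w _ => ?_
          exact MultilinearMap.map_smul_univ _ _ _
  rw [hexp]
  exact Submodule.sum_mem _ fun w _ =>
    Submodule.smul_mem _ _ (Submodule.subset_span ⟨w, rfl⟩)

private lemma span_tprod_basis {M' : Type*} [AddCommGroup M'] [Module ℤ M']
    {m n : ℕ} (b : Module.Basis (Fin m) ℤ M') :
    Submodule.span ℤ
      (Set.range fun w : Fin n → Fin m => PiTensorProduct.tprod ℤ fun i : Fin n => b (w i)) = ⊤ :=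
  span_tprod_basis' b

end Aux3

/-- For `M` free of rank `m` over `ℤ` with basis `x₁,…,xₘ`, the image `S''ₙ(M)` of
the symmetrization map on `Tⁿ(M)` is a free `ℤ`-module with basis the elements
`k₁!⋯k_s!·(x_{j₁}^{(k₁)}⋯x_{j_s}^{(k_s)})*`, indexed by monotone words
`g : Fin n → Fin m` (with `k_j` the multiplicity of `j` in `g`). -/
theorem stmt_12 (M : Type*) [AddCommGroup M] [Module ℤ M] (m n : ℕ)
    (b : Module.Basis (Fin m) ℤ M) :
    ∃ c : Module.Basis {g : Fin n → Fin m // Monotone g} ℤ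
        (LinearMap.range (symmetrize ℤ M n)),
      ∀ g, (c g : PiTensorProduct ℤ (fun _ : Fin n => M)) =
        (∏ j : Fin m, ((Finset.univ.filter fun i => g.val i = j).card).factorial) •
          distinctSym M (⇑b) n g.val := by
  classical
  -- the candidate basis vectors, inside the ambient tensor power
  set K : (Fin n → Fin m) → ℕ :=
    fun g => ∏ j : Fin m, ((Finset.univ.filter fun i => g i = j).card).factorial with hK
  set v : {g : Fin n → Fin m // Monotone g} → PiTensorProduct ℤ (fun _ : Fin n => M) :=
    fun g => K g.val • distinctSym M (⇑b) n g.val with hv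
  have hvsym : ∀ f : Fin n → Fin m,
      symmetrize ℤ M n (PiTensorProduct.tprod ℤ fun i => b (f i)) = K f • distinctSym M (⇑b) n f :=
    fun f => symmetrize_tp b f
  have hKpos : ∀ f : Fin n → Fin m, 0 < K f :=
    fun f => Finset.prod_pos fun j _ => Nat.factorial_pos _
  have hmem : ∀ g : {g : Fin n → Fin m // Monotone g},
      v g ∈ LinearMap.range (symmetrize ℤ M n) :=
    fun g => ⟨PiTensorProduct.tprod ℤ fun i => b (g.val i), hvsym g.val⟩
  -- evaluating the coordinate functionals on the candidate vectors
  have hphiv : ∀ g g' : {g : Fin n → Fin m // Monotone g},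
      phi b g.val (v g') = if g = g' then (K g.val : ℤ) else 0 := by
    intro g g'
    rw [hv]
    simp only [map_nsmul, phi_distinctSym]
    by_cases h : g = g'
    · subst h
      simp
    · have h2 : msc g.val ≠ msc g'.val := by
        intro hh
        exact h (Subtype.ext (monotone_unique g.2 g'.2 hh))
      rw [if_neg h2, if_neg h, smul_zero]
  -- linear independence
  have hindep : LinearIndependent ℤ v := by
    rw [Fintype.linearIndependent_iff]
    intro a ha g
    have h1 := congrArg (phi b g.val) ha
    rw [map_sum, map_zero] at h1
    have h2 : ∀ g' : {g : Fin n → Fin m // Monotone g},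
        phi b g.val (a g' • v g') = if g = g' then a g' * (K g.val : ℤ) else 0 := by
      intro g'
      rw [map_smul, hphiv, smul_eq_mul, mul_ite, mul_zero]
    rw [Finset.sum_congr rfl fun g' _ => h2 g', Finset.sum_ite_eq _ g _, if_pos (Finset.mem_univ g)] at h1
    rcases mul_eq_zero.mp h1 with h | h
    · exact h
    · exact absurd h (by exact_mod_cast (hKpos g.val).ne')
  -- spanning
  have htop : Submodule.span ℤ
      (Set.range fun w : Fin n → Fin m => PiTensorProduct.tprod ℤ fun i => b (w i)) = ⊤ :=
    span_tprod_basis b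
  have hspan : Submodule.span ℤ (Set.range v) = LinearMap.range (symmetrize ℤ M n) := by
    apply le_antisymm
    · rw [Submodule.span_le]
      rintro _ ⟨g, rfl⟩
      exact hmem g
    · rw [LinearMap.range_eq_map, ← htop, Submodule.map_span, Submodule.span_le]
      rintro _ ⟨_, ⟨f, rfl⟩, rfl⟩
      have hg : Monotone (f ∘ ⇑(Tuple.sort f)) := Tuple.monotone_sort f
      have hmsc : msc (f ∘ ⇑(Tuple.sort f)) = msc f := msc_comp_perm f (Tuple.sort f)
      have heq : symmetrize ℤ M n (PiTensorProduct.tprod ℤ fun i => b (f i))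
          = v ⟨f ∘ ⇑(Tuple.sort f), hg⟩ := by
        rw [hvsym f, hv]
        have hKeq : K f = K (f ∘ ⇑(Tuple.sort f)) := (K_congr hmsc).symm
        have hdeq : distinctSym M (⇑b) n f = distinctSym M (⇑b) n (f ∘ ⇑(Tuple.sort f)) := by
          rw [distinctSym, distinctSym]
          refine Finset.sum_congr ?_ fun _ _ => rfl
          refine Finset.filter_congr fun w _ => ?_
          show (msc w = msc f) ↔ (msc w = msc (f ∘ ⇑(Tuple.sort f)))
          rw [hmsc]
        rw [hKeq, hdeq]
      rw [heq]
      exact Submodule.subset_span ⟨_, rfl⟩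
  -- assemble the basis of the submodule
  let v' : {g : Fin n → Fin m // Monotone g} → LinearMap.range (symmetrize ℤ M n) :=
    fun g => ⟨v g, hmem g⟩
  have hindep' : LinearIndependent ℤ v' := by
    apply LinearIndependent.of_comp (LinearMap.range (symmetrize ℤ M n)).subtype
    exact hindep
  have hspan' : ⊤ ≤ Submodule.span ℤ (Set.range v') := by
    have hinj := Submodule.injective_subtype (LinearMap.range (symmetrize ℤ M n))
    have himg : ⇑(LinearMap.range (symmetrize ℤ M n)).subtype '' Set.range v'
        = Set.range v := by
      ext x
      constructor
      · rintro ⟨_, ⟨g, rfl⟩, rfl⟩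
        exact ⟨g, rfl⟩
      · rintro ⟨g, rfl⟩
        exact ⟨v' g, ⟨g, rfl⟩, rfl⟩
    have hmap : Submodule.map (LinearMap.range (symmetrize ℤ M n)).subtype
        (Submodule.span ℤ (Set.range v')) =
        Submodule.map (LinearMap.range (symmetrize ℤ M n)).subtype ⊤ := by
      rw [Submodule.map_span, himg, hspan, Submodule.map_subtype_top]
    exact (Submodule.map_injective_of_injective hinj hmap).symm.le
  refine ⟨Module.Basis.mk hindep' hspan', fun g => ?_⟩
  rw [Module.Basis.mk_apply]
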